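/- Let Z be a non-empty finite set, let P be a strictly positive pmf on Z, and let φ ∈ ℝ^{|Z|} satisfy φᵀ√P = 0. For ε ∈ ℝ define Q_ε(z) = P(z) + ε√(P(z)) φ(z). Then, as ε → 0, D(Q_ε || P) − (1/2)ε²‖φ‖₂² = o(ε²); that is, the function ε ↦ Σ_z Q_ε(z) log(Q_ε(z)/P(z)) − (1/2)ε²‖φ‖₂² is little-o of ε² as ε → 0. (Note that Q_ε is a valid pmf with strictly positive entries for all sufficiently small ε.) -/

import Mathlib

open Filter Asymptotics

lemma aux_kl (p : ℝ) (hp : 0 < p) :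
    (fun x : ℝ => (p + x) * Real.log ((p + x) / p) - x - x ^ 2 / (2 * p))
      =o[nhds (0 : ℝ)] fun x => x ^ 2 := by
  have hO : (fun x : ℝ => (p + x) * Real.log ((p + x) / p) - x - x ^ 2 / (2 * p))
      =O[nhds (0 : ℝ)] fun x => x ^ 3 := by
    rw [isBigO_iff]
    refine ⟨4 / p ^ 2, ?_⟩
    rw [Metric.eventually_nhds_iff]
    refine ⟨p / 2, by positivity, fun x hx => ?_⟩
    rw [Real.dist_eq, sub_zero] at hx
    have hp' : p ≠ 0 := hp.ne'
    set u : ℝ := x / p with hu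
    have hux : x = p * u := by rw [hu, mul_div_assoc', mul_comm, mul_div_assoc, div_self hp', mul_one]
    have huabs : |u| < 1 / 2 := by
      rw [hu, abs_div, abs_of_pos hp, div_lt_iff₀ hp]
      linarith
    have h1 : |(-u)| < 1 := by rw [abs_neg]; linarith
    have hE := Real.abs_log_sub_add_sum_range_le h1 2
    simp only [Finset.sum_range_succ, Finset.sum_range_zero, sub_neg_eq_add] at hE
    -- hE : |(0 + (-u)^(0+1)/(0+1) + (-u)^(1+1)/(1+1)) + log (1 + u)| ≤ |(-u)|^3/(1-|(-u)|)
    have hEn : |Real.log (1 + u) - u + u ^ 2 / 2| ≤ 2 * |u| ^ 3 := by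
      have h2 : |(-u)| ^ (2 + 1) / (1 - |(-u)|) ≤ 2 * |u| ^ 3 := by
        rw [abs_neg]
        rw [div_le_iff₀ (by linarith [abs_nonneg u])]
        have hnn : (0:ℝ) ≤ |u| ^ 3 * (1 / 2 - |u|) :=
          mul_nonneg (pow_nonneg (abs_nonneg u) 3) (by linarith)
        norm_num
        nlinarith [pow_nonneg (abs_nonneg u) 3]
      calc |Real.log (1 + u) - u + u ^ 2 / 2|
          = |(0 + (-u) ^ (0 + 1) / ((0:ℕ) + 1) + (-u) ^ (1 + 1) / ((1:ℕ) + 1)) + Real.log (1 + u)| := by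
            ring_nf
        _ ≤ |(-u)| ^ (2 + 1) / (1 - |(-u)|) := hE
        _ ≤ 2 * |u| ^ 3 := h2
    set E : ℝ := Real.log (1 + u) - u + u ^ 2 / 2 with hEdef
    have hlog : Real.log ((p + x) / p) = Real.log (1 + u) := by
      rw [add_div, div_self hp', hu]
    have hfx : (p + x) * Real.log ((p + x) / p) - x - x ^ 2 / (2 * p)
        = p * ((1 + u) * E - u ^ 3 / 2) := by
      rw [hlog, hux]
      have hL : Real.log (1 + u) = E + u - u ^ 2 / 2 := by rw [hEdef]; ring
      rw [hL]
      field_simp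
      ring
    rw [hfx]
    have h1u : |1 + u| ≤ 3 / 2 := by
      rw [abs_le] at *
      constructor <;> nlinarith [huabs.le, neg_abs_le u, le_abs_self u]
    have hb : |p * ((1 + u) * E - u ^ 3 / 2)| ≤ 4 * p * |u| ^ 3 := by
      rw [abs_mul, abs_of_pos hp]
      have : |(1 + u) * E - u ^ 3 / 2| ≤ |1 + u| * |E| + |u| ^ 3 / 2 := by
        calc |(1 + u) * E - u ^ 3 / 2| ≤ |(1 + u) * E| + |u ^ 3 / 2| := abs_sub _ _
          _ = |1 + u| * |E| + |u| ^ 3 / 2 := by rw [abs_mul, abs_div, abs_pow]; norm_num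
      have hEnn : |E| ≤ 2 * |u| ^ 3 := hEn
      have hm : |1 + u| * |E| ≤ 3 / 2 * (2 * |u| ^ 3) :=
        mul_le_mul h1u hEnn (abs_nonneg E) (by norm_num)
      nlinarith [mul_nonneg hp.le (pow_nonneg (abs_nonneg u) 3), abs_nonneg ((1 + u) * E - u ^ 3 / 2)]
    have hx3 : |x ^ 3| = p ^ 3 * |u| ^ 3 := by
      rw [hux, abs_pow, abs_mul, abs_of_pos hp, mul_pow]
    rw [Real.norm_eq_abs, Real.norm_eq_abs, hx3]
    calc |p * ((1 + u) * E - u ^ 3 / 2)| ≤ 4 * p * |u| ^ 3 := hb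
      _ = 4 / p ^ 2 * (p ^ 3 * |u| ^ 3) := by field_simp
  exact hO.trans_isLittleO (isLittleO_pow_pow (by norm_num))

/-- **Local approximation of KL divergence.** For a strictly positive pmf `P` on a
finite set and a spherical perturbation `φ` with `φᵀ √P = 0`, the KL divergence
`D(Q_ε ‖ P)` of the perturbed pmf `Q_ε = P + ε √P φ` satisfies
`D(Q_ε ‖ P) = (1/2) ε² ‖φ‖₂² + o(ε²)` as `ε → 0`. -/
theorem kl_local_approximation {Z : Type*} [Fintype Z] [Nonempty Z]
    (P : Z → ℝ) (hP_pos : ∀ z, 0 < P z) (hP_sum : ∑ z, P z = 1)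
    (φ : Z → ℝ) (hφ : ∑ z, φ z * Real.sqrt (P z) = 0) :
    (fun ε : ℝ =>
        (∑ z, (P z + ε * Real.sqrt (P z) * φ z) *
            Real.log ((P z + ε * Real.sqrt (P z) * φ z) / P z)) -
          (1 / 2) * ε ^ 2 * ∑ z, (φ z) ^ 2)
      =o[nhds (0 : ℝ)] fun ε => ε ^ 2 := by
  have key : ∀ z : Z, (fun ε : ℝ =>
      (P z + ε * (Real.sqrt (P z) * φ z)) *
        Real.log ((P z + ε * (Real.sqrt (P z) * φ z)) / P z)
      - ε * (Real.sqrt (P z) * φ z)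
      - (ε * (Real.sqrt (P z) * φ z)) ^ 2 / (2 * P z))
      =o[nhds (0 : ℝ)] fun ε => ε ^ 2 := by
    intro z
    set c : ℝ := Real.sqrt (P z) * φ z with hc
    have htend : Tendsto (fun ε : ℝ => ε * c) (nhds 0) (nhds 0) := by
      simpa using (continuous_mul_right c).tendsto 0
    have h := (aux_kl (P z) (hP_pos z)).comp_tendsto htend
    have h2 : (fun ε : ℝ => (ε * c) ^ 2) =O[nhds (0 : ℝ)] fun ε => ε ^ 2 := by
      have := (isBigO_refl (fun ε : ℝ => ε ^ 2) (nhds (0 : ℝ))).const_mul_left (c ^ 2)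
      apply this.congr_left
      intro ε
      ring
    exact (h.trans_isBigO h2)
  have heq : ∀ ε : ℝ, (∑ z, (P z + ε * Real.sqrt (P z) * φ z) *
        Real.log ((P z + ε * Real.sqrt (P z) * φ z) / P z)) -
        (1 / 2) * ε ^ 2 * ∑ z, (φ z) ^ 2
      = ∑ z, ((P z + ε * (Real.sqrt (P z) * φ z)) *
          Real.log ((P z + ε * (Real.sqrt (P z) * φ z)) / P z)
        - ε * (Real.sqrt (P z) * φ z)
        - (ε * (Real.sqrt (P z) * φ z)) ^ 2 / (2 * P z)) := by
    intro ε
    rw [Finset.sum_sub_distrib, Finset.sum_sub_distrib]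
    have hB : ∑ z, ε * (Real.sqrt (P z) * φ z) = 0 := by
      rw [← Finset.mul_sum]
      have h0 : ∑ z, Real.sqrt (P z) * φ z = 0 := by
        rw [← hφ]
        exact Finset.sum_congr rfl fun z _ => mul_comm _ _
      rw [h0, mul_zero]
    have hC : ∀ z : Z, (ε * (Real.sqrt (P z) * φ z)) ^ 2 / (2 * P z)
        = 1 / 2 * ε ^ 2 * (φ z) ^ 2 := by
      intro z
      have hs : Real.sqrt (P z) ^ 2 = P z := Real.sq_sqrt (hP_pos z).le
      have hpz : P z ≠ 0 := (hP_pos z).ne'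
      field_simp
      linear_combination ε ^ 2 * φ z ^ 2 * hs
    simp only [hC]
    rw [hB, sub_zero, ← Finset.mul_sum]
    congr 1
    · apply Finset.sum_congr rfl
      intro z _
      rw [mul_assoc]
  have := IsLittleO.sum (fun z (_ : z ∈ (Finset.univ : Finset Z)) => key z)
  exact this.congr_left fun ε => by rw [Finset.sum_apply]; exact (heq ε).symm
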